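/- arXiv:2410.19515 — 4 statements merged into one kernel-verified Lean document; each statement's English description precedes it below -/
import Mathlib

section
/- Let T be a pruned tree of height ω with |T| = λ, where λ is an infinite cardinal. Then the set [T] of cofinal branches of T has cardinality at most λ, or has cardinality exactly λ^{ℵ₀}. -/
open Cardinal Ordinal

/-- The height of an element `x` of a tree: the order type of its set of strict
predecessors (or `0` by convention if the predecessors are not well-ordered). -/
noncomputable def elemHeight {α : Type} [PartialOrder α] (x : α) : Ordinal := by
  classical
  exact if h : IsWellOrder {y : α // y < x} (· < ·) then
    @Ordinal.type {y : α // y < x} (· < ·) h else 0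

/-- A partial order is a tree order if the set of strict predecessors of every element
is well-ordered by `<`. -/
def IsTreeOrder (α : Type) [PartialOrder α] : Prop :=
  ∀ x : α, IsWellOrder {y : α // y < x} (· < ·)

/-- The `o`-th level of a tree: the set of elements of height `o`. -/
def level (α : Type) [PartialOrder α] (o : Ordinal) : Set α :=
  {x : α | elemHeight x = o}

/-- The height of a tree: the least ordinal whose corresponding level is empty. -/
noncomputable def treeHeight (α : Type) [PartialOrder α] : Ordinal :=
  sInf {o : Ordinal | level α o = ∅}

/-- A cofinal branch of a tree: a maximal chain meeting every nonempty level. -/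
def IsCofinalBranch (α : Type) [PartialOrder α] (B : Set α) : Prop :=
  IsMaxChain (· < ·) B ∧
    ∀ o : Ordinal, (level α o).Nonempty → ∃ y ∈ B, elemHeight y = o

/-- The number of cofinal branches of a tree. -/
noncomputable def branchCard (α : Type) [PartialOrder α] : Cardinal :=
  #{B : Set α // IsCofinalBranch α B}

section Tree
variable {α : Type} [PartialOrder α] (ht : IsTreeOrder α)

section
include ht

lemma eh_def (x : α) : elemHeight x = @Ordinal.type {y : α // y < x} (· < ·) (ht x) := by
  unfold elemHeight
  rw [dif_pos (ht x)]

lemma eh_typein {x y : α} (h : y < x) :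
    elemHeight y = @Ordinal.typein {z : α // z < x} (· < ·) (ht x) ⟨y, h⟩ := by
  haveI := ht x
  haveI := ht y
  rw [eh_def ht, ← Ordinal.type_subrel]
  refine RelIso.ordinal_type_eq ?_
  exact ⟨⟨fun z => ⟨⟨z.1, lt_trans z.2 h⟩, z.2⟩,
    fun z => ⟨z.1.1, z.2⟩, fun z => rfl, fun z => rfl⟩, Iff.rfl⟩

lemma eh_mono {x y : α} (h : y < x) : elemHeight y < elemHeight x := by
  haveI := ht x
  rw [eh_typein ht h, eh_def ht]
  exact Ordinal.typein_lt_type _ _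

lemma eh_surj {x : α} {o : Ordinal} (h : o < elemHeight x) :
    ∃ y, y < x ∧ elemHeight y = o := by
  haveI := ht x
  rw [eh_def ht] at h
  obtain ⟨⟨y, hy⟩, hy2⟩ := Ordinal.typein_surj (α := {z : α // z < x}) (· < ·) h
  exact ⟨y, hy, (eh_typein ht hy).trans hy2⟩

end

variable (hh : treeHeight α = Ordinal.omega0)

section
include ht hh

lemma eh_lt_omega (x : α) : elemHeight x < Ordinal.omega0 := by
  have hne : {o : Ordinal | level α o = ∅}.Nonempty := by
    by_contra h
    rw [Set.not_nonempty_iff_eq_empty] at h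
    rw [treeHeight, h] at hh
    simp at hh
    exact Ordinal.omega0_ne_zero hh.symm
  have hmem : level α (Ordinal.omega0) = ∅ := by
    have := csInf_mem hne
    rwa [show sInf {o : Ordinal | level α o = ∅} = Ordinal.omega0 from hh] at this
  by_contra h
  push_neg at h
  rw [Set.eq_empty_iff_forall_notMem] at hmem
  rcases eq_or_lt_of_le h with heq | hlt
  · exact hmem x heq.symm
  · obtain ⟨y, _, hy2⟩ := eh_surj ht hlt
    exact hmem y hy2

lemma level_nonempty (n : ℕ) : (level α (n : Ordinal)).Nonempty := by
  by_contra h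
  rw [Set.not_nonempty_iff_eq_empty] at h
  have : treeHeight α ≤ (n : Ordinal) := csInf_le (OrderBot.bddBelow _) h
  rw [hh] at this
  exact absurd this (not_le.mpr (Ordinal.nat_lt_omega0 n))

end
include ht in
/-- two comparable predecessors -/
lemma preds_comparable {x y z : α} (hy : y < x) (hz : z < x) : y ≤ z ∨ z ≤ y := by
  haveI := ht x
  have := trichotomous (r := (· < ·)) (⟨y, hy⟩ : {w : α // w < x}) ⟨z, hz⟩
  rcases this with h | h | h
  · exact Or.inl (le_of_lt h)
  · exact Or.inl (le_of_eq (congrArg Subtype.val h))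
  · exact Or.inr (le_of_lt h)

include ht in
lemma chain_lt_of_eh_lt {B : Set α} (hB : IsChain (· < ·) B) {z z' : α} (hz : z ∈ B)
    (hz' : z' ∈ B) (h : elemHeight z < elemHeight z') : z < z' := by
  rcases eq_or_ne z z' with rfl | hne
  · exact absurd h (lt_irrefl _)
  · rcases hB hz hz' hne with h' | h'
    · exact h'
    · exact absurd (eh_mono ht h') (not_lt.mpr (le_of_lt h))

include ht in
lemma chain_eq_of_eh_eq {B : Set α} (hB : IsChain (· < ·) B) {z z' : α} (hz : z ∈ B)
    (hz' : z' ∈ B) (h : elemHeight z = elemHeight z') : z = z' := by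
  by_contra hne
  rcases hB hz hz' hne with h' | h'
  · exact absurd (eh_mono ht h') (by rw [h]; exact lt_irrefl _)
  · exact absurd (eh_mono ht h') (by rw [h]; exact lt_irrefl _)

include ht in
lemma mem_of_lt_mem {B : Set α} (hB : IsMaxChain (· < ·) B) {z w : α} (hz : z ∈ B)
    (hw : w < z) : w ∈ B := by
  have hch : IsChain (· < ·) (insert w B) := by
    intro a ha b hb hne
    rcases ha with rfl | ha <;> rcases hb with rfl | hb
    · exact absurd rfl hne
    · -- a = w, b ∈ B
      rcases eq_or_ne b z with rfl | hbz
      · exact Or.inl hw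
      · rcases hB.1 hb hz hbz with h | h
        · -- b < z : both b, w preds of z
          rcases preds_comparable ht h hw with h' | h'
          · rcases lt_or_eq_of_le h' with h'' | h''
            · exact Or.inr h''
            · exact absurd h''.symm hne
          · exact Or.inl (lt_of_le_of_ne h' hne)
        · exact Or.inl (lt_trans hw h)
    · rcases eq_or_ne a z with rfl | haz
      · exact Or.inr hw
      · rcases hB.1 ha hz haz with h | h
        · rcases preds_comparable ht h hw with h' | h'
          · exact Or.inl (lt_of_le_of_ne h' hne)
          · rcases lt_or_eq_of_le h' with h'' | h''
            · exact Or.inr h''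
            · exact absurd h''.symm hne
        · exact Or.inr (lt_trans hw h)
    · exact hB.1 ha hb hne
  have := hB.2 hch (Set.subset_insert w B)
  rw [this]
  exact Set.mem_insert w B


/-- the element of a cofinal branch at height n -/
noncomputable def bAt {B : Set α} (hB : IsCofinalBranch α B) (n : ℕ) : α :=
  Classical.choose (hB.2 (n : Ordinal) (level_nonempty ht hh n))

lemma bAt_mem {B : Set α} (hB : IsCofinalBranch α B) (n : ℕ) : bAt ht hh hB n ∈ B :=
  (Classical.choose_spec (hB.2 (n : Ordinal) (level_nonempty ht hh n))).1

lemma bAt_eh {B : Set α} (hB : IsCofinalBranch α B) (n : ℕ) :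
    elemHeight (bAt ht hh hB n) = (n : Ordinal) :=
  (Classical.choose_spec (hB.2 (n : Ordinal) (level_nonempty ht hh n))).2

/-- an element of a branch of height n equals bAt n -/
lemma eq_bAt {B : Set α} (hB : IsCofinalBranch α B) {z : α} (hz : z ∈ B) {n : ℕ}
    (hn : elemHeight z = (n : Ordinal)) : z = bAt ht hh hB n :=
  chain_eq_of_eh_eq ht hB.1.1 hz (bAt_mem ht hh hB n) (by rw [hn, bAt_eh])

lemma branch_ext {B B' : Set α} (hB : IsCofinalBranch α B) (hB' : IsCofinalBranch α B')
    (h : ∀ n : ℕ, bAt ht hh hB n = bAt ht hh hB' n) : B = B' := by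
  have key : ∀ (C C' : Set α) (hC : IsCofinalBranch α C) (hC' : IsCofinalBranch α C'),
      (∀ n : ℕ, bAt ht hh hC n = bAt ht hh hC' n) → C ⊆ C' := by
    intro C C' hC hC' hcc z hz
    obtain ⟨n, hn⟩ := Ordinal.lt_omega0.mp (eh_lt_omega ht hh z)
    rw [eq_bAt ht hh hC hz hn, hcc n]
    exact bAt_mem ht hh hC' n
  exact Set.Subset.antisymm (key B B' hB hB' h) (key B' B hB' hB fun n => (h n).symm)

include ht hh in
/-- extend a chain with unbounded heights to a cofinal branch -/
lemma chain_extend {C : Set α} (hC : IsChain (· < ·) C)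
    (hub : ∀ n : ℕ, ∃ z ∈ C, (n : Ordinal) ≤ elemHeight z) :
    ∃ B : Set α, IsCofinalBranch α B ∧ C ⊆ B := by
  obtain ⟨B, hBmax, hCB⟩ := hC.exists_maxChain
  refine ⟨B, ⟨hBmax, ?_⟩, hCB⟩
  intro o honempty
  obtain ⟨w, hw⟩ := honempty
  have hwo : elemHeight w = o := hw
  have h1 : o < Ordinal.omega0 := hwo ▸ eh_lt_omega ht hh w
  obtain ⟨n, hn⟩ := Ordinal.lt_omega0.mp h1
  obtain ⟨z, hzC, hzeh⟩ := hub n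
  rcases eq_or_lt_of_le hzeh with heq | hlt
  · exact ⟨z, hCB hzC, by rw [← heq, hn]⟩
  · obtain ⟨y, hyz, hyeh⟩ := eh_surj ht hlt
    exact ⟨y, mem_of_lt_mem ht hBmax (hCB hzC) hyz, by rw [hyeh, hn]⟩

/-- branches through x, as a cardinal -/
noncomputable def btc (α : Type) [PartialOrder α] (x : α) : Cardinal :=
  #{B : {B : Set α // IsCofinalBranch α B} // x ∈ B.1}

variable (lam : Cardinal) (hlam : ℵ₀ ≤ lam) (hcard : #α = lam)

include hlam hcard in
lemma card_le_of_witness (A : Set α) (hA : ∀ z ∈ A, btc α z ≤ lam)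
    (P : {B : Set α // IsCofinalBranch α B} → Prop)
    (hP : ∀ B, P B → ∃ z ∈ A, z ∈ B.1) :
    #{B : {B : Set α // IsCofinalBranch α B} // P B} ≤ lam := by
  classical
  let Br := {B : Set α // IsCofinalBranch α B}
  let F : {B : Br // P B} → Σ z : A, {B : Br // z.1 ∈ B.1} := fun p =>
    ⟨⟨Classical.choose (hP p.1 p.2), (Classical.choose_spec (hP p.1 p.2)).1⟩,
      ⟨p.1, (Classical.choose_spec (hP p.1 p.2)).2⟩⟩
  have hFinj : Function.Injective F := by
    intro p q h
    have : (F p).2.1 = (F q).2.1 := by rw [h]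
    exact Subtype.ext this
  calc #{B : Br // P B} ≤ #(Σ z : A, {B : Br // z.1 ∈ B.1}) := mk_le_of_injective hFinj
    _ = Cardinal.sum (fun z : A => btc α z.1) := by rw [Cardinal.mk_sigma]; rfl
    _ ≤ Cardinal.sum (fun _ : A => lam) := Cardinal.sum_le_sum _ _ (fun z => hA z.1 z.2)
    _ = #A * lam := Cardinal.sum_const' _ _
    _ ≤ lam * lam := by
        apply mul_le_mul' _ le_rfl
        exact le_trans (Cardinal.mk_subtype_le _) (le_of_eq hcard)
    _ = lam := Cardinal.mul_eq_self hlam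

include ht hh hlam hcard in
lemma S_nonempty (hbig : lam < #{B : Set α // IsCofinalBranch α B}) :
    ∃ x : α, lam < btc α x := by
  by_contra h
  push_neg at h
  have := card_le_of_witness lam hlam hcard Set.univ (fun z _ => h z)
    (fun _ => True) (fun B _ => ⟨bAt ht hh B.2 0, Set.mem_univ _, bAt_mem ht hh B.2 0⟩)
  rw [Cardinal.mk_congr (Equiv.subtypeUnivEquiv (fun _ => trivial))] at this
  exact absurd hbig (not_lt.mpr this)

include ht hh hlam hcard in
lemma step2 (x : α) (hx : lam < btc α x) : ∃ y : α, lam < btc α y ∧ x < y := by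
  by_contra h
  push_neg at h
  have key : btc α x ≤ lam := by
    refine card_le_of_witness lam hlam hcard {z | x < z}
      (fun z hz => ?_) (fun B => x ∈ B.1) (fun B hB => ?_)
    · by_contra hc
      push_neg at hc
      exact (h z hc) hz
    · obtain ⟨n, hn⟩ := Ordinal.lt_omega0.mp (eh_lt_omega ht hh x)
      refine ⟨bAt ht hh B.2 (n+1), ?_, bAt_mem ht hh B.2 (n+1)⟩
      refine chain_lt_of_eh_lt ht B.2.1.1 hB (bAt_mem ht hh B.2 (n+1)) ?_
      rw [hn, bAt_eh ht hh B.2 (n+1)]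
      exact_mod_cast Nat.lt_succ_self n
  exact absurd hx (not_lt.mpr key)

include ht hh hlam hcard in
lemma splitting (y : α) (hy : lam < btc α y) :
    ∃ z w : α, lam < btc α z ∧ lam < btc α w ∧ y < z ∧ y < w ∧ ¬ z ≤ w ∧ ¬ w ≤ z := by
  classical
  by_contra hsplit
  push_neg at hsplit
  have hcomp : ∀ z w : α, lam < btc α z → lam < btc α w → y < z → y < w →
      z ≤ w ∨ w ≤ z := by
    intro z w h1 h2 h3 h4
    by_contra hc
    push_neg at hc
    exact hc.2 (hsplit z w h1 h2 h3 h4 hc.1)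
  set Br := {B : Set α // IsCofinalBranch α B} with hBr
  let s1 : Set Br := {B | y ∈ B.1 ∧ ∃ z ∈ B.1, y < z ∧ btc α z ≤ lam}
  let s2 : Set Br := {B | y ∈ B.1 ∧ ∀ z ∈ B.1, y < z → lam < btc α z}
  have hsub : {B : Br | y ∈ B.1} ⊆ s1 ∪ s2 := by
    intro B hB
    by_cases hc : ∃ z ∈ B.1, y < z ∧ btc α z ≤ lam
    · exact Or.inl ⟨hB, hc⟩
    · push_neg at hc
      exact Or.inr ⟨hB, fun z hz hyz => hc z hz hyz⟩
  have h1 : #s1 ≤ lam := by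
    have := card_le_of_witness lam hlam hcard {z | y < z ∧ btc α z ≤ lam}
      (fun z hz => hz.2) (fun B => B ∈ s1) (fun B hB => by
        obtain ⟨_, z, hz1, hz2, hz3⟩ := hB
        exact ⟨z, ⟨hz2, hz3⟩, hz1⟩)
    exact this
  have h2 : #s2 ≤ 1 := by
    rw [Cardinal.mk_le_one_iff_set_subsingleton]
    intro B hB B' hB'
    refine Subtype.ext (branch_ext ht hh B.2 B'.2 (fun n => ?_))
    obtain ⟨n₀, hn₀⟩ := Ordinal.lt_omega0.mp (eh_lt_omega ht hh y)
    set u := bAt ht hh B.2 n with hu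
    set u' := bAt ht hh B'.2 n with hu'
    have hueh : elemHeight u = (n : Ordinal) := bAt_eh ht hh B.2 n
    have hueh' : elemHeight u' = (n : Ordinal) := bAt_eh ht hh B'.2 n
    rcases lt_trichotomy n n₀ with hnn | hnn | hnn
    · -- u, u' < y
      have hult : u < y := chain_lt_of_eh_lt ht B.2.1.1 (bAt_mem ht hh B.2 n) hB.1
        (by rw [hueh, hn₀]; exact_mod_cast hnn)
      have hult' : u' < y := chain_lt_of_eh_lt ht B'.2.1.1 (bAt_mem ht hh B'.2 n) hB'.1
        (by rw [hueh', hn₀]; exact_mod_cast hnn)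
      rcases preds_comparable ht hult hult' with h | h
      · rcases lt_or_eq_of_le h with h' | h'
        · exact absurd (eh_mono ht h') (by rw [hueh, hueh']; exact lt_irrefl _)
        · exact h'
      · rcases lt_or_eq_of_le h with h' | h'
        · exact absurd (eh_mono ht h') (by rw [hueh, hueh']; exact lt_irrefl _)
        · exact h'.symm
    · -- u = y = u'
      have : u = y := chain_eq_of_eh_eq ht B.2.1.1 (bAt_mem ht hh B.2 n) hB.1
        (by rw [hueh, hn₀, hnn])
      have h' : u' = y := chain_eq_of_eh_eq ht B'.2.1.1 (bAt_mem ht hh B'.2 n) hB'.1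
        (by rw [hueh', hn₀, hnn])
      rw [this, h']
    · -- y < u, y < u'
      have hult : y < u := chain_lt_of_eh_lt ht B.2.1.1 hB.1 (bAt_mem ht hh B.2 n)
        (by rw [hueh, hn₀]; exact_mod_cast hnn)
      have hult' : y < u' := chain_lt_of_eh_lt ht B'.2.1.1 hB'.1 (bAt_mem ht hh B'.2 n)
        (by rw [hueh', hn₀]; exact_mod_cast hnn)
      have hbu : lam < btc α u := hB.2 u (bAt_mem ht hh B.2 n) hult
      have hbu' : lam < btc α u' := hB'.2 u' (bAt_mem ht hh B'.2 n) hult'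
      rcases hcomp u u' hbu hbu' hult hult' with h | h
      · rcases lt_or_eq_of_le h with h' | h'
        · exact absurd (eh_mono ht h') (by rw [hueh, hueh']; exact lt_irrefl _)
        · exact h'
      · rcases lt_or_eq_of_le h with h' | h'
        · exact absurd (eh_mono ht h') (by rw [hueh, hueh']; exact lt_irrefl _)
        · exact h'.symm
  have : btc α y ≤ lam := by
    calc btc α y = #{B : Br | y ∈ B.1} := rfl
      _ ≤ #(s1 ∪ s2 : Set Br) := Cardinal.mk_le_mk_of_subset hsub
      _ ≤ #s1 + #s2 := Cardinal.mk_union_le _ _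
      _ ≤ lam + 1 := add_le_add h1 h2
      _ = lam := Cardinal.add_one_eq hlam
  exact absurd hy (not_lt.mpr this)

include ht hh hlam hcard in
lemma anti_fin (n : ℕ) (y : α) (hy : lam < btc α y) :
    ∃ F : Finset α, (∀ z ∈ F, lam < btc α z ∧ y < z) ∧
      (∀ z ∈ F, ∀ w ∈ F, z ≠ w → ¬ z ≤ w) ∧ n < F.card := by
  classical
  induction n with
  | zero =>
    obtain ⟨z, hz1, hz2⟩ := step2 ht hh lam hlam hcard y hy
    exact ⟨{z}, fun w hw => by simp at hw; subst hw; exact ⟨hz1, hz2⟩,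
      fun z' hz' w hw hne => by simp at hz' hw; subst hz'; subst hw; exact absurd rfl hne,
      by simp⟩
  | succ n ih =>
    obtain ⟨F, hF1, hF2, hF3⟩ := ih
    have hFne : F.Nonempty := Finset.card_pos.mp (Nat.zero_lt_of_lt hF3)
    obtain ⟨a, ha⟩ := hFne
    obtain ⟨haS, hya⟩ := hF1 a ha
    obtain ⟨z, w, hz1, hw1, haz, haw, hzw, hwz⟩ := splitting ht hh lam hlam hcard a haS
    have hzw' : z ≠ w := fun h => hzw (le_of_eq h)
    -- z, w not in F.erase a
    have hkey : ∀ v : α, a < v → v ∉ F.erase a := by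
      intro v hav hv
      rw [Finset.mem_erase] at hv
      exact hF2 a ha v hv.2 (Ne.symm hv.1) (le_of_lt hav)
    have hz2 : z ∉ Finset.erase F a := hkey z haz
    have hw2 : w ∉ Finset.erase F a := hkey w haw
    have hzmem : z ∉ insert w (F.erase a) := by
      rw [Finset.mem_insert]
      rintro (rfl | h)
      · exact hzw le_rfl
      · exact hz2 h
    refine ⟨insert z (insert w (F.erase a)), ?_, ?_, ?_⟩
    · intro v hv
      rw [Finset.mem_insert, Finset.mem_insert] at hv
      rcases hv with rfl | rfl | hv
      · exact ⟨hz1, lt_trans hya haz⟩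
      · exact ⟨hw1, lt_trans hya haw⟩
      · exact hF1 v (Finset.mem_of_mem_erase hv)
    · -- pairwise incomparability
      have main : ∀ v : α, a < v → (¬ v ≤ w ∨ v = w) → ∀ c ∈ F.erase a, ¬ v ≤ c ∧ ¬ c ≤ v := by
        intro v hav _ c hc
        rw [Finset.mem_erase] at hc
        constructor
        · intro hvc
          have hac : a < c := lt_of_lt_of_le hav hvc
          exact hF2 a ha c hc.2 (Ne.symm hc.1) (le_of_lt hac)
        · intro hcv
          rcases lt_or_eq_of_le hcv with h' | h'
          · -- c < v and a < v : comparable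
            rcases preds_comparable ht h' hav with h | h
            · exact hF2 c hc.2 a ha hc.1 h
            · exact hF2 a ha c hc.2 (Ne.symm hc.1) h
          · subst h'
            exact hF2 a ha c hc.2 (Ne.symm hc.1) (le_of_lt hav)
      intro v hv v' hv' hne
      rw [Finset.mem_insert, Finset.mem_insert] at hv hv'
      rcases hv with rfl | rfl | hv <;> rcases hv' with rfl | rfl | hv'
      · exact absurd rfl hne
      · exact hzw
      · exact (main v haz (Or.inl hzw) v' hv').1
      · exact hwz
      · exact absurd rfl hne
      · exact (main v haw (Or.inr rfl) v' hv').1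
      · exact (main v' haz (Or.inl hzw) v hv).2
      · exact (main v' haw (Or.inr rfl) v hv).2
      · exact hF2 v (Finset.mem_of_mem_erase hv) v' (Finset.mem_of_mem_erase hv') hne
    · -- cardinality
      have hwmem : w ∉ F.erase a := hw2
      rw [Finset.card_insert_of_notMem hzmem, Finset.card_insert_of_notMem hwmem,
        Finset.card_erase_of_mem ha]
      have : 1 ≤ F.card := Nat.one_le_iff_ne_zero.mpr (by omega)
      omega

include ht hh hlam hcard in
lemma anti_inf (y : α) (κ : Cardinal)
    (hκ : κ ≤ #{z : α // lam < btc α z ∧ y ≤ z}) (ρ : Cardinal) (hρ1 : ℵ₀ ≤ ρ)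
    (hρ2 : ρ < κ) :
    ∃ Aset : Set α, (∀ z ∈ Aset, lam < btc α z ∧ y < z) ∧
      (∀ z ∈ Aset, ∀ w ∈ Aset, z ≠ w → ¬ z ≤ w) ∧ ρ < #Aset := by
  classical
  set Wy : Set α := {z | lam < btc α z ∧ y ≤ z} with hWy
  set slice : ℕ → Set α := fun m => {z | z ∈ Wy ∧ elemHeight z = (m : Ordinal)} with hslice
  have hm : ∃ m : ℕ, ρ < #(slice m) := by
    by_contra hc
    push_neg at hc
    have hcover : Wy = ⋃ m : ℕ, slice m := by
      ext z
      simp only [Set.mem_iUnion]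
      constructor
      · intro hz
        obtain ⟨m, hm⟩ := Ordinal.lt_omega0.mp (eh_lt_omega ht hh z)
        exact ⟨m, hz, hm⟩
      · rintro ⟨m, hm, _⟩
        exact hm
    have : #Wy ≤ ρ := by
      calc #Wy = #(⋃ m : ℕ, slice m) := by rw [hcover]
        _ ≤ Cardinal.sum (fun m : ℕ => #(slice m)) := Cardinal.mk_iUnion_le_sum_mk
        _ ≤ Cardinal.sum (fun _ : ℕ => ρ) := Cardinal.sum_le_sum _ _ hc
        _ = #ℕ * ρ := Cardinal.sum_const' _ _
        _ = ℵ₀ * ρ := by rw [Cardinal.mk_nat]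
        _ = ρ := by rw [Cardinal.mul_eq_max le_rfl hρ1, max_eq_right hρ1]
    have : κ ≤ ρ := le_trans hκ (le_trans (le_of_eq rfl) this)
    exact absurd hρ2 (not_lt.mpr this)
  obtain ⟨m, hm⟩ := hm
  refine ⟨{z | z ∈ Wy ∧ elemHeight z = (m : Ordinal) ∧ z ≠ y}, ?_, ?_, ?_⟩
  · rintro z ⟨⟨hz1, hz2⟩, _, hz4⟩
    exact ⟨hz1, lt_of_le_of_ne hz2 (Ne.symm hz4)⟩
  · rintro z ⟨_, hz2, _⟩ w ⟨_, hw2, _⟩ hne hle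
    have : z < w := lt_of_le_of_ne hle hne
    exact absurd (eh_mono ht this) (by rw [hz2, hw2]; exact lt_irrefl _)
  · by_contra hc
    push_neg at hc
    have hsub : slice m ⊆ {z | z ∈ Wy ∧ elemHeight z = (m : Ordinal) ∧ z ≠ y} ∪ {y} := by
      intro z hz
      by_cases hzy : z = y
      · exact Or.inr hzy
      · exact Or.inl ⟨hz.1, hz.2, hzy⟩
    have : #(slice m) ≤ ρ := by
      calc #(slice m) ≤ #({z | z ∈ Wy ∧ elemHeight z = (m : Ordinal) ∧ z ≠ y} ∪ {y} : Set α) :=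
            Cardinal.mk_le_mk_of_subset hsub
        _ ≤ #{z | z ∈ Wy ∧ elemHeight z = (m : Ordinal) ∧ z ≠ y} + #({y} : Set α) :=
            Cardinal.mk_union_le _ _
        _ ≤ ρ + 1 := add_le_add hc (by simp)
        _ = ρ := Cardinal.add_one_eq hρ1
    exact absurd hm (not_lt.mpr this)

include ht hh hcard in
lemma upper_bound : #{B : Set α // IsCofinalBranch α B} ≤ lam ^ (ℵ₀ : Cardinal) := by
  classical
  have hinj : Function.Injective
      (fun B : {B : Set α // IsCofinalBranch α B} => fun n : ℕ => bAt ht hh B.2 n) := by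
    intro B B' h
    exact Subtype.ext (branch_ext ht hh B.2 B'.2 (fun n => congrFun h n))
  calc #{B : Set α // IsCofinalBranch α B} ≤ #(ℕ → α) := mk_le_of_injective hinj
    _ = #α ^ (#ℕ) := (Cardinal.power_def α ℕ).symm
    _ = lam ^ (ℵ₀ : Cardinal) := by rw [Cardinal.mk_nat, hcard]

include ht hh hlam hcard in
lemma zeta (x₀ : α) (hx₀ : lam < btc α x₀) (κ : Cardinal)
    (hκ : κ = #{z : α // lam < btc α z ∧ x₀ ≤ z}) (hκinf : ℵ₀ ≤ κ) :
    lam < κ ^ (ℵ₀ : Cardinal) := by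
  classical
  by_contra hc
  push_neg at hc
  set Br := {B : Set α // IsCofinalBranch α B} with hBr
  set W := {z : α // lam < btc α z ∧ x₀ ≤ z} with hW
  let s1 : Set Br := {B | x₀ ∈ B.1 ∧ ∃ z ∈ B.1, x₀ ≤ z ∧ btc α z ≤ lam}
  let s2 : Set Br := {B | x₀ ∈ B.1 ∧ ∀ z ∈ B.1, x₀ ≤ z → lam < btc α z}
  have hsub : {B : Br | x₀ ∈ B.1} ⊆ s1 ∪ s2 := by
    intro B hB
    by_cases hcc : ∃ z ∈ B.1, x₀ ≤ z ∧ btc α z ≤ lam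
    · exact Or.inl ⟨hB, hcc⟩
    · push_neg at hcc
      exact Or.inr ⟨hB, fun z hz hxz => hcc z hz hxz⟩
  have h1 : #s1 ≤ lam := by
    exact card_le_of_witness lam hlam hcard {z | btc α z ≤ lam}
      (fun z hz => hz) (fun B => B ∈ s1) (fun B hB => by
        obtain ⟨_, z, hz1, _, hz3⟩ := hB
        exact ⟨z, hz3, hz1⟩)
  have h2 : #s2 ≤ κ ^ (ℵ₀ : Cardinal) := by
    obtain ⟨n₀, hn₀⟩ := Ordinal.lt_omega0.mp (eh_lt_omega ht hh x₀)
    let G : s2 → (ℕ → Option W) := fun B => fun n =>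
      if h : lam < btc α (bAt ht hh B.1.2 n) ∧ x₀ ≤ (bAt ht hh B.1.2 n) then
        some ⟨bAt ht hh B.1.2 n, h⟩ else none
    have hGinj : Function.Injective G := by
      intro B B' h
      have key : ∀ n : ℕ, bAt ht hh B.1.2 n = bAt ht hh B'.1.2 n := by
        intro n
        have hn := congrFun h n
        set u := bAt ht hh B.1.2 n with hu
        set u' := bAt ht hh B'.1.2 n with hu'
        have hueh : elemHeight u = (n : Ordinal) := bAt_eh ht hh B.1.2 n
        have hueh' : elemHeight u' = (n : Ordinal) := bAt_eh ht hh B'.1.2 n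
        rcases lt_trichotomy n n₀ with hnn | hnn | hnn
        · have hult : u < x₀ := chain_lt_of_eh_lt ht B.1.2.1.1 (bAt_mem ht hh B.1.2 n)
            B.2.1 (by rw [hueh, hn₀]; exact_mod_cast hnn)
          have hult' : u' < x₀ := chain_lt_of_eh_lt ht B'.1.2.1.1 (bAt_mem ht hh B'.1.2 n)
            B'.2.1 (by rw [hueh', hn₀]; exact_mod_cast hnn)
          rcases preds_comparable ht hult hult' with hcomp | hcomp
          · rcases lt_or_eq_of_le hcomp with h' | h'
            · exact absurd (eh_mono ht h') (by rw [hueh, hueh']; exact lt_irrefl _)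
            · exact h'
          · rcases lt_or_eq_of_le hcomp with h' | h'
            · exact absurd (eh_mono ht h') (by rw [hueh, hueh']; exact lt_irrefl _)
            · exact h'.symm
        · have he1 : u = x₀ := chain_eq_of_eh_eq ht B.1.2.1.1 (bAt_mem ht hh B.1.2 n)
            B.2.1 (by rw [hueh, hn₀, hnn])
          have he2 : u' = x₀ := chain_eq_of_eh_eq ht B'.1.2.1.1 (bAt_mem ht hh B'.1.2 n)
            B'.2.1 (by rw [hueh', hn₀, hnn])
          rw [he1, he2]
        · have hult : x₀ < u := chain_lt_of_eh_lt ht B.1.2.1.1 B.2.1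
            (bAt_mem ht hh B.1.2 n) (by rw [hueh, hn₀]; exact_mod_cast hnn)
          have hult' : x₀ < u' := chain_lt_of_eh_lt ht B'.1.2.1.1 B'.2.1
            (bAt_mem ht hh B'.1.2 n) (by rw [hueh', hn₀]; exact_mod_cast hnn)
          have hc1 : lam < btc α u ∧ x₀ ≤ u :=
            ⟨B.2.2 u (bAt_mem ht hh B.1.2 n) (le_of_lt hult), le_of_lt hult⟩
          have hc2 : lam < btc α u' ∧ x₀ ≤ u' :=
            ⟨B'.2.2 u' (bAt_mem ht hh B'.1.2 n) (le_of_lt hult'), le_of_lt hult'⟩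
          have hn2 : (some ⟨u, hc1⟩ : Option W) = some ⟨u', hc2⟩ := by
            have hx := hn
            simp only [G] at hx
            rwa [dif_pos hc1, dif_pos hc2] at hx
          exact congrArg Subtype.val (Option.some_injective _ hn2)
      exact Subtype.ext (Subtype.ext (branch_ext ht hh B.1.2 B'.1.2 key))
    calc #s2 ≤ #(ℕ → Option W) := mk_le_of_injective hGinj
      _ = (#(Option W)) ^ (ℵ₀ : Cardinal) := by
          rw [← Cardinal.power_def, Cardinal.mk_nat]
      _ = (κ + 1) ^ (ℵ₀ : Cardinal) := by rw [Cardinal.mk_option, hκ]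
      _ = κ ^ (ℵ₀ : Cardinal) := by rw [Cardinal.add_one_eq hκinf]
  have : btc α x₀ ≤ lam := by
    calc btc α x₀ = #{B : Br | x₀ ∈ B.1} := rfl
      _ ≤ #(s1 ∪ s2 : Set Br) := Cardinal.mk_le_mk_of_subset hsub
      _ ≤ #s1 + #s2 := Cardinal.mk_union_le _ _
      _ ≤ lam + lam := add_le_add h1 (le_trans h2 hc)
      _ = lam := Cardinal.add_eq_self hlam
  exact absurd hx₀ (not_lt.mpr this)

include ht hh in
lemma construct (x₁ : α) (hx₁ : lam < btc α x₁) (D : ℕ → Type)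
    (j : {z : α // lam < btc α z ∧ x₁ ≤ z} → ∀ m, D m) (hj : Function.Injective j)
    (pick : ∀ y : α, lam < btc α y → x₁ ≤ y → ∀ m : ℕ, ∃ g : D m → α,
      Function.Injective g ∧ (∀ d, lam < btc α (g d) ∧ y < g d) ∧
      (∀ d d', d ≠ d' → ¬ g d ≤ g d')) :
    #(ℕ → {z : α // lam < btc α z ∧ x₁ ≤ z}) ≤ #{B : Set α // IsCofinalBranch α B} := by
  classical
  let W := {z : α // lam < btc α z ∧ x₁ ≤ z}
  let pg : ∀ (y : W) (m : ℕ), D m → α := fun y m =>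
    Classical.choose (pick y.1 y.2.1 y.2.2 m)
  have pgspec : ∀ (y : W) (m : ℕ), Function.Injective (pg y m) ∧
      (∀ d, lam < btc α (pg y m d) ∧ y.1 < pg y m d) ∧
      (∀ d d', d ≠ d' → ¬ pg y m d ≤ pg y m d') := fun y m =>
    Classical.choose_spec (pick y.1 y.2.1 y.2.2 m)
  let Y : (ℕ → W) → ℕ → W := fun f k => Nat.rec (motive := fun _ => W)
    ⟨x₁, hx₁, le_rfl⟩
    (fun k yk => ⟨pg yk k.unpair.2 (j (f k.unpair.1) k.unpair.2),
      ((pgspec yk k.unpair.2).2.1 _).1,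
      le_trans yk.2.2 (le_of_lt ((pgspec yk k.unpair.2).2.1 _).2)⟩) k
  have hYval : ∀ f k, (Y f (k+1)).1 = pg (Y f k) k.unpair.2 (j (f k.unpair.1) k.unpair.2) :=
    fun f k => rfl
  have hYlt : ∀ f k, (Y f k).1 < (Y f (k+1)).1 := fun f k =>
    ((pgspec (Y f k) k.unpair.2).2.1 _).2
  have hmono : ∀ f, StrictMono (fun k => (Y f k).1) := fun f =>
    strictMono_nat_of_lt_succ (hYlt f)
  have hheight : ∀ (f : ℕ → W) (k : ℕ), (k : Ordinal) ≤ elemHeight (Y f k).1 := by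
    intro f k
    induction k with
    | zero => simp
    | succ k ih =>
      have h1 : (k : Ordinal) < elemHeight (Y f (k+1)).1 :=
        lt_of_le_of_lt ih (eh_mono ht (hYlt f k))
      rw [Nat.cast_succ, Ordinal.add_one_eq_succ]
      exact Order.succ_le_of_lt h1
  have hBex : ∀ f, ∃ B : {B : Set α // IsCofinalBranch α B}, ∀ k, (Y f k).1 ∈ B.1 := by
    intro f
    have hchain : IsChain (· < ·) (Set.range fun k => (Y f k).1) := by
      rintro a ⟨k, rfl⟩ b ⟨l, rfl⟩ hne
      rcases lt_trichotomy k l with h | h | h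
      · exact Or.inl (hmono f h)
      · exact absurd (congrArg (fun k => (Y f k).1) h) hne
      · exact Or.inr (hmono f h)
    obtain ⟨B, hB1, hB2⟩ := chain_extend ht hh hchain
      (fun n => ⟨(Y f n).1, ⟨n, rfl⟩, hheight f n⟩)
    exact ⟨⟨B, hB1⟩, fun k => hB2 ⟨k, rfl⟩⟩
  let Φ : (ℕ → W) → {B : Set α // IsCofinalBranch α B} := fun f => Classical.choose (hBex f)
  have hΦ : ∀ f k, (Y f k).1 ∈ (Φ f).1 := fun f k => Classical.choose_spec (hBex f) k
  have hΦinj : Function.Injective Φ := by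
    intro f g h
    have hY : ∀ k, Y f k = Y g k := by
      intro k
      induction k with
      | zero => rfl
      | succ k ih =>
        have ha : (Y f (k+1)).1 = pg (Y f k) k.unpair.2 (j (f k.unpair.1) k.unpair.2) :=
          hYval f k
        have hb : (Y g (k+1)).1 = pg (Y f k) k.unpair.2 (j (g k.unpair.1) k.unpair.2) := by
          rw [hYval g k, ← ih]
        have h1 : (Y f (k+1)).1 ∈ (Φ f).1 := hΦ f (k+1)
        have h2 : (Y g (k+1)).1 ∈ (Φ f).1 := by rw [h]; exact hΦ g (k+1)
        by_cases hd : j (f k.unpair.1) k.unpair.2 = j (g k.unpair.1) k.unpair.2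
        · apply Subtype.ext
          rw [ha, hb, hd]
        · exfalso
          have hic := (pgspec (Y f k) k.unpair.2).2.2 _ _ hd
          have hic' := (pgspec (Y f k) k.unpair.2).2.2 _ _ (Ne.symm hd)
          rcases eq_or_ne (Y f (k+1)).1 (Y g (k+1)).1 with he | hne2
          · rw [ha, hb] at he
            exact hic (le_of_eq he)
          · rcases (Φ f).2.1.1 h1 h2 hne2 with hlt | hlt
            · rw [ha, hb] at hlt
              exact hic (le_of_lt hlt)
            · rw [ha, hb] at hlt
              exact hic' (le_of_lt hlt)
    funext n
    apply hj
    funext m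
    have hk := hY (Nat.pair n m + 1)
    have hkv : (Y f (Nat.pair n m + 1)).1 = (Y g (Nat.pair n m + 1)).1 :=
      congrArg Subtype.val hk
    rw [hYval f (Nat.pair n m), hYval g (Nat.pair n m), ← hY (Nat.pair n m)] at hkv
    have hinj := (pgspec (Y f (Nat.pair n m)) (Nat.pair n m).unpair.2).1 hkv
    have hun : (Nat.pair n m).unpair = (n, m) := Nat.unpair_pair n m
    rw [show (Nat.pair n m).unpair.1 = n from by rw [hun],
      show (Nat.pair n m).unpair.2 = m from by rw [hun]] at hinj
    exact hinj
  exact mk_le_of_injective hΦinj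

end Tree

/-- For a pruned tree of height `ω` of infinite cardinality `λ`, the set of cofinal
branches has cardinality at most `λ`, or exactly `λ^{ℵ₀}`. -/
theorem stmt8 (lam : Cardinal) (hlam : ℵ₀ ≤ lam) (α : Type) [PartialOrder α]
    (hcard : #α = lam) (ht : IsTreeOrder α) (hh : treeHeight α = Ordinal.omega0)
    (hpruned : ∀ x : α, ∃ B : Set α, IsCofinalBranch α B ∧ x ∈ B) :
    branchCard α ≤ lam ∨ branchCard α = lam ^ ℵ₀ := by
  classical
  by_cases hb : branchCard α ≤ lam
  · exact Or.inl hb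
  right
  push_neg at hb
  have hbig : lam < #{B : Set α // IsCofinalBranch α B} := hb
  obtain ⟨xS, hxS⟩ := S_nonempty ht hh lam hlam hcard hbig
  set ν : α → Cardinal := fun x => #{z : α // lam < btc α z ∧ x ≤ z} with hν
  have hNU : {c : Cardinal | ∃ x, lam < btc α x ∧ ν x = c}.Nonempty := ⟨ν xS, xS, hxS, rfl⟩
  obtain ⟨κ, ⟨x₀, hx₀, hκdef⟩, hκmin⟩ := Cardinal.lt_wf.has_min _ hNU
  have hmin : ∀ y, lam < btc α y → κ ≤ ν y := by
    intro y hy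
    by_contra hc
    push_neg at hc
    exact hκmin (ν y) ⟨y, hy, rfl⟩ hc
  have hcone : ∀ y, lam < btc α y → x₀ ≤ y → ν y = κ := by
    intro y hy hxy
    refine le_antisymm ?_ (hmin y hy)
    rw [← hκdef]
    exact Cardinal.mk_subtype_le_of_subset (fun z hz => ⟨hz.1, le_trans hxy hz.2⟩)
  -- κ is infinite
  have hκinf : ℵ₀ ≤ κ := by
    let cs : ℕ → {z : α // lam < btc α z ∧ x₀ ≤ z} := fun k =>
      Nat.rec (motive := fun _ => {z : α // lam < btc α z ∧ x₀ ≤ z})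
        ⟨x₀, hx₀, le_rfl⟩
        (fun _ ck => ⟨Classical.choose (step2 ht hh lam hlam hcard ck.1 ck.2.1),
          (Classical.choose_spec (step2 ht hh lam hlam hcard ck.1 ck.2.1)).1,
          le_trans ck.2.2
            (le_of_lt (Classical.choose_spec (step2 ht hh lam hlam hcard ck.1 ck.2.1)).2)⟩) k
    have hlt : ∀ k, (cs k).1 < (cs (k+1)).1 := fun k =>
      (Classical.choose_spec (step2 ht hh lam hlam hcard (cs k).1 (cs k).2.1)).2
    have hmono : StrictMono (fun k => (cs k).1) := strictMono_nat_of_lt_succ hlt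
    have hinj : Function.Injective cs := fun k l h =>
      hmono.injective (congrArg Subtype.val h)
    rw [← hκdef]
    calc (ℵ₀ : Cardinal) = #ℕ := Cardinal.mk_nat.symm
      _ ≤ ν x₀ := mk_le_of_injective hinj
  have hzeta : lam < κ ^ (ℵ₀ : Cardinal) :=
    zeta ht hh lam hlam hcard x₀ hx₀ κ hκdef.symm hκinf
  -- the lower bound
  have hlow : κ ^ (ℵ₀ : Cardinal) ≤ #{B : Set α // IsCofinalBranch α B} := by
    by_cases hcase : ∃ x₁, (lam < btc α x₁ ∧ x₀ ≤ x₁) ∧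
        ∀ m : ℕ, #{z : α // (lam < btc α z ∧ x₁ ≤ z) ∧ elemHeight z = (m : Ordinal)} < κ
    · -- CASE A
      obtain ⟨x₁, ⟨hx₁, hx₀₁⟩, hsl⟩ := hcase
      let Dm : ℕ → Type := fun m =>
        Option {z : α // (lam < btc α z ∧ x₁ ≤ z) ∧ elemHeight z = (m : Ordinal)}
      let j : {z : α // lam < btc α z ∧ x₁ ≤ z} → ∀ m, Dm m := fun w m =>
        if h : elemHeight w.1 = (m : Ordinal) then some ⟨w.1, ⟨w.2, h⟩⟩ else none
      have hj : Function.Injective j := by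
        intro w w' h
        obtain ⟨n, hn⟩ := Ordinal.lt_omega0.mp (eh_lt_omega ht hh w.1)
        have h2 := congrFun h n
        simp only [j] at h2
        rw [dif_pos hn] at h2
        by_cases h3 : elemHeight w'.1 = (n : Ordinal)
        · rw [dif_pos h3] at h2
          exact Subtype.ext (congrArg Subtype.val (Option.some_injective _ h2 :
            (⟨w.1, ⟨w.2, hn⟩⟩ : {z : α // (lam < btc α z ∧ x₁ ≤ z) ∧
              elemHeight z = (n : Ordinal)}) = ⟨w'.1, ⟨w'.2, h3⟩⟩) ▸ rfl)
        · rw [dif_neg h3] at h2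
          exact absurd h2 (by simp)
      have pick : ∀ y : α, lam < btc α y → x₁ ≤ y → ∀ m : ℕ, ∃ g : Dm m → α,
          Function.Injective g ∧ (∀ d, lam < btc α (g d) ∧ y < g d) ∧
          (∀ d d', d ≠ d' → ¬ g d ≤ g d') := by
        intro y hy hxy m
        by_cases hfin :
            #{z : α // (lam < btc α z ∧ x₁ ≤ z) ∧ elemHeight z = (m : Ordinal)} < ℵ₀
        · obtain ⟨nn, hnn⟩ := Cardinal.lt_aleph0.mp hfin
          obtain ⟨F, hF1, hF2, hF3⟩ := anti_fin ht hh lam hlam hcard nn y hy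
          have hle : #(Dm m) ≤ #{x : α // x ∈ F} := by
            rw [Cardinal.mk_option, hnn, Cardinal.mk_coe_finset]
            rw [← Nat.cast_add_one]
            exact_mod_cast Nat.succ_le_of_lt hF3
          obtain ⟨e⟩ := (Cardinal.le_def _ _).mp hle
          refine ⟨fun d => (e d).1, fun d d' hdd => e.injective (Subtype.ext hdd),
            fun d => hF1 (e d).1 (e d).2, fun d d' hdd hcc => ?_⟩
          refine hF2 (e d).1 (e d).2 (e d').1 (e d').2 ?_ hcc
          intro hcc2
          exact hdd (e.injective (Subtype.ext hcc2))
        · push_neg at hfin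
          obtain ⟨Aset, hA1, hA2, hA3⟩ := anti_inf ht hh lam hlam hcard y κ
            (hmin y hy)
            (#{z : α // (lam < btc α z ∧ x₁ ≤ z) ∧ elemHeight z = (m : Ordinal)})
            hfin (hsl m)
          have hle : #(Dm m) ≤ #Aset := by
            rw [Cardinal.mk_option, Cardinal.add_one_eq hfin]
            exact le_of_lt hA3
          obtain ⟨e⟩ := (Cardinal.le_def _ _).mp hle
          refine ⟨fun d => (e d).1, fun d d' hdd => e.injective (Subtype.ext hdd),
            fun d => hA1 (e d).1 (e d).2, fun d d' hdd hcc => ?_⟩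
          refine hA2 (e d).1 (e d).2 (e d').1 (e d').2 ?_ hcc
          intro hcc2
          exact hdd (e.injective (Subtype.ext hcc2))
      have hc := construct ht hh lam x₁ hx₁ Dm j hj pick
      have hW₁ : #{z : α // lam < btc α z ∧ x₁ ≤ z} = κ := hcone x₁ hx₁ hx₀₁
      calc κ ^ (ℵ₀ : Cardinal)
          = #{z : α // lam < btc α z ∧ x₁ ≤ z} ^ (#ℕ) := by rw [hW₁, Cardinal.mk_nat]
        _ = #(ℕ → {z : α // lam < btc α z ∧ x₁ ≤ z}) := Cardinal.power_def _ _
        _ ≤ #{B : Set α // IsCofinalBranch α B} := hc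
    · -- CASE B
      push_neg at hcase
      let Dm : ℕ → Type := fun _ => {z : α // lam < btc α z ∧ x₀ ≤ z}
      let j : {z : α // lam < btc α z ∧ x₀ ≤ z} → ∀ m, Dm m := fun w _ => w
      have hj : Function.Injective j := fun w w' h => congrFun h 0
      have pick : ∀ y : α, lam < btc α y → x₀ ≤ y → ∀ m : ℕ, ∃ g : Dm m → α,
          Function.Injective g ∧ (∀ d, lam < btc α (g d) ∧ y < g d) ∧
          (∀ d d', d ≠ d' → ¬ g d ≤ g d') := by
        intro y hy hxy m
        obtain ⟨m₀, hm₀⟩ := hcase y ⟨hy, hxy⟩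
        -- the slice at level m₀ above y has size ≥ κ
        have hy_ne : ∀ z : α, (lam < btc α z ∧ y ≤ z) ∧ elemHeight z = (m₀ : Ordinal) →
            y < z := by
          intro z ⟨⟨hz1, hz2⟩, hz3⟩
          rcases lt_or_eq_of_le hz2 with h | h
          · exact h
          · exfalso
            -- then the slice is a subsingleton, contradicting κ ≤ #slice
            have hsub : {z : α | (lam < btc α z ∧ y ≤ z) ∧ elemHeight z = (m₀ : Ordinal)}.Subsingleton := by
              intro a ⟨⟨_, ha2⟩, ha3⟩ b ⟨⟨_, hb2⟩, hb3⟩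
              have hya : y = a := by
                rcases lt_or_eq_of_le ha2 with h' | h'
                · exact absurd (eh_mono ht h')
                    (by rw [ha3, ← hz3, h]; exact lt_irrefl _)
                · exact h'
              have hyb : y = b := by
                rcases lt_or_eq_of_le hb2 with h' | h'
                · exact absurd (eh_mono ht h')
                    (by rw [hb3, ← hz3, h]; exact lt_irrefl _)
                · exact h'
              rw [← hya, ← hyb]
            have h1 : #{z : α // (lam < btc α z ∧ y ≤ z) ∧ elemHeight z = (m₀ : Ordinal)} ≤ 1 :=
              Cardinal.mk_le_one_iff_set_subsingleton.mpr hsub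
            have := le_trans hm₀ h1
            exact absurd (lt_of_lt_of_le Cardinal.one_lt_aleph0 hκinf) (not_lt.mpr this)
        have hκW : #(Dm m) = κ := by rw [show Dm m = {z : α // lam < btc α z ∧ x₀ ≤ z} from rfl]; exact hcone x₀ hx₀ le_rfl
        have hle : #(Dm m) ≤ #{z : α // (lam < btc α z ∧ y ≤ z) ∧ elemHeight z = (m₀ : Ordinal)} := by
          rw [hκW]; exact hm₀
        obtain ⟨e⟩ := (Cardinal.le_def _ _).mp hle
        refine ⟨fun d => (e d).1, fun d d' hdd => e.injective (Subtype.ext hdd),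
          fun d => ⟨(e d).2.1.1, hy_ne (e d).1 (e d).2⟩, fun d d' hdd hcc => ?_⟩
        have hne : (e d).1 ≠ (e d').1 := fun hcc2 => hdd (e.injective (Subtype.ext hcc2))
        have : (e d).1 < (e d').1 := lt_of_le_of_ne hcc hne
        exact absurd (eh_mono ht this)
          (by rw [(e d).2.2, (e d').2.2]; exact lt_irrefl _)
      have hc := construct ht hh lam x₀ hx₀ Dm j hj pick
      have hW₁ : #{z : α // lam < btc α z ∧ x₀ ≤ z} = κ := hcone x₀ hx₀ le_rfl
      calc κ ^ (ℵ₀ : Cardinal)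
          = #{z : α // lam < btc α z ∧ x₀ ≤ z} ^ (#ℕ) := by rw [hW₁, Cardinal.mk_nat]
        _ = #(ℕ → {z : α // lam < btc α z ∧ x₀ ≤ z}) := Cardinal.power_def _ _
        _ ≤ #{B : Set α // IsCofinalBranch α B} := hc
  refine le_antisymm (upper_bound ht hh lam hcard) ?_
  calc lam ^ (ℵ₀ : Cardinal) ≤ (κ ^ (ℵ₀ : Cardinal)) ^ (ℵ₀ : Cardinal) :=
        Cardinal.power_le_power_right (le_of_lt hzeta)
    _ = κ ^ ((ℵ₀ : Cardinal) * ℵ₀) := Cardinal.power_mul.symm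
    _ = κ ^ (ℵ₀ : Cardinal) := by rw [Cardinal.aleph0_mul_aleph0]
    _ ≤ branchCard α := hlow
end

section
/- There is no linear order M that simultaneously has a downward-closed subset order-isomorphic to ℕ (with its usual order) and a downward-closed subset order-isomorphic to ℚ (with its usual order). -/
/-- No linear order `M` has both a downward-closed subset order-isomorphic to `ℕ` and a
downward-closed subset order-isomorphic to `ℚ`. -/
theorem stmt9 (M : Type) [LinearOrder M] :
    ¬ ∃ D₁ D₂ : Set M,
      (∀ y ∈ D₁, ∀ x, x < y → x ∈ D₁) ∧
      (∀ y ∈ D₂, ∀ x, x < y → x ∈ D₂) ∧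
      Nonempty (ℕ ≃o ↥D₁) ∧ Nonempty (ℚ ≃o ↥D₂) := by
  rintro ⟨D₁, D₂, hd₁, hd₂, ⟨f⟩, ⟨g⟩⟩
  -- comparability of downward-closed sets
  by_cases hsub : D₁ ⊆ D₂
  · -- least element of D₁ is in D₂, but ℚ has no least element
    have hmin : ∀ x ∈ D₁, (f 0 : M) ≤ x := by
      intro x hx
      have : f 0 ≤ f (f.symm ⟨x, hx⟩) := f.monotone (Nat.zero_le _)
      simpa using Subtype.coe_le_coe.mpr this
    have h0 : (f 0 : M) ∈ D₂ := hsub (f 0).2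
    set q : ℚ := g.symm ⟨(f 0 : M), h0⟩ with hq
    have hlt : (g (q - 1) : M) < (f 0 : M) := by
      have : g (q - 1) < g q := g.strictMono (by linarith)
      have := Subtype.coe_lt_coe.mpr this
      simpa [hq] using this
    have hmem : (g (q - 1) : M) ∈ D₁ := hd₁ _ (f 0).2 _ hlt
    exact absurd (hmin _ hmem) (not_le.mpr hlt)
  · -- D₂ ⊆ D₁, so D₂ inherits well-foundedness, contradicting ℚ has no least element
    have hsub' : D₂ ⊆ D₁ := by
      obtain ⟨a, ha1, ha2⟩ := Set.not_subset.mp hsub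
      intro b hb
      have hba : b < a := by
        rcases lt_trichotomy a b with h | h | h
        · exact absurd (hd₂ b hb a h) ha2
        · exact absurd (h ▸ hb) ha2
        · exact h
      exact hd₁ a ha1 b hba
    -- set of ℕ-indices landing in D₂
    have hne : ∃ n, (f n : M) ∈ D₂ := by
      refine ⟨f.symm ⟨(g 0 : M), hsub' (g 0).2⟩, ?_⟩
      simpa using (g 0).2
    classical
    set n₀ := Nat.find hne with hn₀
    have hmem : (f n₀ : M) ∈ D₂ := Nat.find_spec hne
    have hmin : ∀ x ∈ D₂, (f n₀ : M) ≤ x := by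
      intro x hx
      have hx1 : x ∈ D₁ := hsub' hx
      have hk : (f (f.symm ⟨x, hx1⟩) : M) ∈ D₂ := by simpa using hx
      have : n₀ ≤ f.symm ⟨x, hx1⟩ := Nat.find_min' hne hk
      have := f.monotone this
      simpa using Subtype.coe_le_coe.mpr this
    set q : ℚ := g.symm ⟨(f n₀ : M), hmem⟩ with hq
    have hlt : (g (q - 1) : M) < (f n₀ : M) := by
      have : g (q - 1) < g q := g.strictMono (by linarith)
      have := Subtype.coe_lt_coe.mpr this
      simpa [hq] using this
    exact absurd (hmin _ (g (q - 1)).2) (not_le.mpr hlt)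
end

section
/- Let κ be an infinite cardinal with 2^{κ} = κ⁺. Let S and R be sets with |R| ≤ κ⁺, and let (f_i)_{i < κ⁺⁺} be a family of pairwise distinct partial functions from S to R, each with domain of cardinality at most κ. Then there exist indices i ≠ j such that f_i and f_j are compatible, i.e. they agree on the intersection of their domains. In particular, any antichain in the partial order of such functions (ordered by reverse inclusion of graphs, with two functions incompatible iff they disagree somewhere on the common domain) has cardinality at most κ⁺. -/
open Cardinal Set

namespace Stmt11Aux

variable {S R ι : Type}

open Classical in
/-- restriction of a partial function to a set -/
noncomputable def restr (T : Set S) (g : S → Option R) : S → Option R :=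
  fun x => if x ∈ T then g x else none

noncomputable def rep' (f : ι → S → Option R) (T : Set S) (g : S → Option R)
    (h : ∃ i, restr T (f i) = g) : ι := h.choose

lemma rep'_spec (f : ι → S → Option R) (T : Set S) (g) (h) :
    restr T (f (rep' f T g h)) = g := h.choose_spec

noncomputable def rep (f : ι → S → Option R) (T : Set S) (j : ι) : ι :=
  rep' f T (restr T (f j)) ⟨j, rfl⟩

lemma rep_spec (f : ι → S → Option R) (T : Set S) (j : ι) :
    restr T (f (rep f T j)) = restr T (f j) := rep'_spec ..

/-- partial functions with domain inside `T` of size at most `κ` -/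
def G (κ : Cardinal) (T : Set S) : Set (S → Option R) :=
  {g | (∀ x, g x ≠ none → x ∈ T) ∧ #{x : S | g x ≠ none} ≤ κ}

lemma succ_pow {κ : Cardinal} (hκ : ℵ₀ ≤ κ) (hpow : 2 ^ κ = Order.succ κ) :
    (Order.succ κ) ^ κ = Order.succ κ := by
  apply le_antisymm
  · calc (Order.succ κ) ^ κ ≤ (2 ^ κ) ^ κ := power_le_power_right hpow.ge
    _ = 2 ^ (κ * κ) := power_mul.symm
    _ = 2 ^ κ := by rw [mul_eq_self hκ]
    _ = Order.succ κ := hpow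
  · exact self_le_power _ (one_le_aleph0.trans hκ)

lemma aleph0_le_succ {κ : Cardinal} (hκ : ℵ₀ ≤ κ) : ℵ₀ ≤ Order.succ κ :=
  hκ.trans (Order.le_succ κ)

set_option maxHeartbeats 1000000 in
lemma mk_G_le {κ : Cardinal} (hκ : ℵ₀ ≤ κ) (hpow : 2 ^ κ = Order.succ κ)
    (hR : #R ≤ Order.succ κ) (T : Set S) (hT : #T ≤ Order.succ κ) :
    #(G κ T : Set (S → Option R)) ≤ Order.succ κ := by
  classical
  set μ := Order.succ κ with hμ
  -- index all possible domains
  have hidx : #{t : Set S // t ⊆ T ∧ #t ≤ κ} ≤ μ := by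
    refine (mk_bounded_subset_le T κ).trans ?_
    calc max #T ℵ₀ ^ κ ≤ μ ^ κ :=
      power_le_power_right (max_le hT (aleph0_le_succ hκ))
    _ = μ := succ_pow hκ hpow
  have hsub : (G κ T : Set (S → Option R)) ⊆
      ⋃ t : {t : Set S // t ⊆ T ∧ #t ≤ κ}, {g : S → Option R | {x | g x ≠ none} = t.1} := by
    rintro g ⟨h1, h2⟩
    exact mem_iUnion.2 ⟨⟨{x | g x ≠ none}, fun x hx => h1 x hx, h2⟩, rfl⟩
  refine (mk_le_mk_of_subset hsub).trans ?_
  refine (mk_iUnion_le _).trans ?_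
  have hfib : ∀ t : {t : Set S // t ⊆ T ∧ #t ≤ κ},
      #({g : S → Option R | {x | g x ≠ none} = t.1}) ≤ μ := by
    intro t
    have : #({g : S → Option R | {x | g x ≠ none} = t.1}) ≤ #(↥t.1 → R) := by
      refine mk_le_of_injective (f := fun g x =>
        (g.1 x.1).get (by
          have hx : x.1 ∈ {x | g.1 x ≠ none} := g.2.symm ▸ x.2
          exact Option.isSome_iff_ne_none.2 hx)) ?_
      intro g g' h
      apply Subtype.ext; funext x
      by_cases hx : x ∈ t.1
      · have hs : (g.1 x).isSome :=
          Option.isSome_iff_ne_none.2 ((Set.ext_iff.1 g.2 x).2 hx)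
        have hs' : (g'.1 x).isSome :=
          Option.isSome_iff_ne_none.2 ((Set.ext_iff.1 g'.2 x).2 hx)
        have hxx := congrFun h ⟨x, hx⟩
        calc g.1 x = some ((g.1 x).get hs) := (Option.some_get hs).symm
        _ = some ((g'.1 x).get hs') := congrArg some hxx
        _ = g'.1 x := Option.some_get hs'
      · have h1 : g.1 x = none := by
          by_contra hc; exact hx (g.2 ▸ hc)
        have h2 : g'.1 x = none := by
          by_contra hc; exact hx (g'.2 ▸ hc)
        rw [h1, h2]
    refine this.trans ?_
    rw [← power_def]
    calc #R ^ #(↥t.1) ≤ μ ^ #(↥t.1) := power_le_power_right hR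
    _ ≤ μ ^ κ := power_le_power_left (aleph0_pos.trans_le (aleph0_le_succ hκ)).ne' t.2.2
    _ = μ := succ_pow hκ hpow
  exact (mul_le_mul' hidx (ciSup_le' hfib)).trans_eq (mul_eq_self (aleph0_le_succ hκ))

lemma card_range_rep_le {κ : Cardinal} (hκ : ℵ₀ ≤ κ) (hpow : 2 ^ κ = Order.succ κ)
    (hR : #R ≤ Order.succ κ) (f : ι → S → Option R)
    (hdom : ∀ i, #{x : S | f i x ≠ none} ≤ κ)
    (T : Set S) (hT : #T ≤ Order.succ κ) :
    #(Set.range (rep f T)) ≤ Order.succ κ := by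
  classical
  rcases isEmpty_or_nonempty ι with h | h
  · rw [Set.range_eq_empty, mk_emptyCollection]
    exact zero_le
  · set φ : ↥(G κ T : Set (S → Option R)) → ι := fun g =>
      if h : ∃ i, restr T (f i) = g.1 then rep' f T g.1 h else Classical.arbitrary ι with hφ
    have hsub : Set.range (rep f T) ⊆ Set.range φ := by
      rintro _ ⟨j, rfl⟩
      have hmem : restr T (f j) ∈ (G κ T : Set (S → Option R)) := by
        constructor
        · intro x hx
          by_contra hxT
          exact hx (if_neg hxT)
        · refine (mk_le_mk_of_subset ?_).trans (hdom j)
          intro x hx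
          simp only [restr, Set.mem_setOf_eq] at hx ⊢
          by_cases hxT : x ∈ T
          · rwa [if_pos hxT] at hx
          · exact absurd (if_neg hxT) hx
      refine ⟨⟨restr T (f j), hmem⟩, ?_⟩
      rw [hφ]
      simp only
      rw [dif_pos ⟨j, rfl⟩]
      rfl
    exact ((mk_le_mk_of_subset hsub).trans (mk_range_le)).trans
      (mk_G_le hκ hpow hR T hT)

section Rec

variable (f : ι → S → Option R)

noncomputable def chosen {o : Ordinal} : o.ToType → Set ι :=
  wellFounded_lt.fix fun a IH =>
    Set.range (rep f (⋃ b : Set.Iio a, ⋃ i ∈ IH b.1 b.2, {x | f i x ≠ none}))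

noncomputable def Tst {o : Ordinal} (a : o.ToType) : Set S :=
  ⋃ b : Set.Iio a, ⋃ i ∈ chosen f b.1, {x | f i x ≠ none}

lemma chosen_eq {o : Ordinal} (a : o.ToType) :
    chosen f a = Set.range (rep f (Tst f a)) := by
  unfold chosen Tst
  rw [WellFounded.fix_eq]
  rfl

lemma card_stage {κ : Cardinal} (hκ : ℵ₀ ≤ κ) (hpow : 2 ^ κ = Order.succ κ)
    (hR : #R ≤ Order.succ κ) (hdom : ∀ i, #{x : S | f i x ≠ none} ≤ κ)
    (a : (Order.succ κ).ord.ToType) :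
    #(Tst f a) ≤ Order.succ κ ∧ #(chosen f a) ≤ Order.succ κ := by
  refine wellFounded_lt.induction
    (C := fun a : (Order.succ κ).ord.ToType =>
      #(Tst f a) ≤ Order.succ κ ∧ #(chosen f a) ≤ Order.succ κ) a fun x IH => ?_
  have hIio : #(Set.Iio x) ≤ κ := Order.lt_succ_iff.1 (Cardinal.mk_Iio_ord_toType x)
  have hT : #(Tst f x) ≤ Order.succ κ := by
    refine (mk_iUnion_le _).trans ?_
    have hinner : ∀ b : Set.Iio x,
        #(⋃ i ∈ chosen f b.1, {y : S | f i y ≠ none}) ≤ Order.succ κ := by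
      intro b
      refine (mk_biUnion_le _ _).trans ?_
      have h2 : #(chosen f b.1) ≤ Order.succ κ := (IH b.1 b.2).2
      have h3 : (⨆ i : chosen f b.1, #{y : S | f (i : ι) y ≠ none}) ≤ κ :=
        ciSup_le' fun i => hdom i
      exact (mul_le_mul' h2 (h3.trans (Order.le_succ κ))).trans_eq
        (mul_eq_self (aleph0_le_succ hκ))
    exact (mul_le_mul' (hIio.trans (Order.le_succ κ)) (ciSup_le' hinner)).trans_eq
      (mul_eq_self (aleph0_le_succ hκ))
  refine ⟨hT, ?_⟩
  rw [chosen_eq]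
  exact card_range_rep_le hκ hpow hR f hdom _ hT

end Rec

lemma key (κ : Cardinal) (hκ : ℵ₀ ≤ κ) (hpow : 2 ^ κ = Order.succ κ)
    {S R ι : Type} (hR : #R ≤ Order.succ κ) (hι : Order.succ κ < #ι)
    (f : ι → S → Option R) (hdom : ∀ i : ι, #{x : S | f i x ≠ none} ≤ κ) :
    ∃ i j : ι, i ≠ j ∧ ∀ x : S, f i x ≠ none → f j x ≠ none → f i x = f j x := by
  classical
  set μ := Order.succ κ with hμ
  haveI : Nonempty μ.ord.ToType := Ordinal.toType_nonempty_iff_ne_zero.2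
    (fun h => (aleph0_pos.trans_le (aleph0_le_succ hκ)).ne'
      (Cardinal.ord_eq_zero.1 h))
  have hW : #μ.ord.ToType = μ := by rw [mk_toType, card_ord]
  -- the set of all chosen indices
  set C : Set ι := ⋃ a : μ.ord.ToType, chosen f a with hC
  have hCcard : #C ≤ μ := by
    refine (mk_iUnion_le _).trans ?_
    have : (⨆ a : μ.ord.ToType, #(chosen f a)) ≤ μ :=
      ciSup_le' fun a => (card_stage f hκ hpow hR hdom a).2
    exact (mul_le_mul' hW.le this).trans_eq (mul_eq_self (aleph0_le_succ hκ))
  obtain ⟨j, hj⟩ : ∃ j, j ∉ C := by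
    by_contra h
    push_neg at h
    have hCu : C = Set.univ := Set.eq_univ_of_forall h
    have : #ι ≤ μ := by
      calc #ι = #(Set.univ : Set ι) := mk_univ.symm
      _ = #C := by rw [hCu]
      _ ≤ μ := hCcard
    exact absurd this (not_le.2 hι)
  -- the stage at which each point of the domain of f j appears
  set st : {x : S | f j x ≠ none} → μ.ord.ToType := fun x =>
    if h : ∃ a : μ.ord.ToType, x.1 ∈ ⋃ i ∈ chosen f a, {y : S | f i y ≠ none} then h.choose
    else Classical.arbitrary μ.ord.ToType with hst
  haveI : IsWellOrder μ.ord.ToType (· < ·) := isWellOrder_lt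
  have hbdd : Set.Bounded (· < ·) (Set.range st) := by
    by_contra hnb
    rw [not_bounded_iff] at hnb
    have hcof : IsCofinal (Set.range st) := fun a => by
      obtain ⟨b, hb, hba⟩ := hnb a
      exact ⟨b, hb, not_lt.1 hba⟩
    have := Order.cof_le hcof
    rw [Ordinal.cof_toType, (isRegular_succ hκ).cof_eq] at this
    exact absurd (this.trans (mk_range_le.trans (hdom j))) (not_le.2 (Order.lt_succ κ))
  obtain ⟨b, hb⟩ := hbdd
  have hsub : {x : S | f j x ≠ none} ∩ (⋃ a : μ.ord.ToType, ⋃ i ∈ chosen f a, {y : S | f i y ≠ none})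
      ⊆ Tst f b := by
    rintro x ⟨hx1, hx2⟩
    have hex : ∃ a : μ.ord.ToType, x ∈ ⋃ i ∈ chosen f a, {y : S | f i y ≠ none} :=
      Set.mem_iUnion.1 hx2
    have hstx : st ⟨x, hx1⟩ = hex.choose := dif_pos hex
    have hlt : hex.choose < b := by
      have := hb _ ⟨⟨x, hx1⟩, rfl⟩
      rwa [hstx] at this
    exact Set.mem_iUnion.2 ⟨⟨hex.choose, hlt⟩, hex.choose_spec⟩
  set i := rep f (Tst f b) j with hi
  have hichosen : i ∈ chosen f b := by rw [chosen_eq]; exact ⟨j, rfl⟩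
  have hij : i ≠ j := fun e => hj (e ▸ Set.mem_iUnion.2 ⟨b, hichosen⟩)
  refine ⟨i, j, hij, fun x hxi hxj => ?_⟩
  have hxT : x ∈ Tst f b := hsub ⟨hxj, Set.mem_iUnion.2 ⟨b, Set.mem_biUnion hichosen hxi⟩⟩
  have hres := congrFun (rep_spec f (Tst f b) j) x
  simp only [restr, if_pos hxT] at hres
  exact hres

end Stmt11Aux


/-- Suppose `κ` is infinite with `2^κ = κ⁺` and `|R| ≤ κ⁺`. Given `κ⁺⁺`-many pairwise
distinct partial functions from `S` to `R` (coded as functions `S → Option R`), each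
with domain of cardinality at most `κ`, two of them are compatible, i.e. agree on the
intersection of their domains. In particular, any family of such partial functions
which is pairwise incompatible has cardinality at most `κ⁺`. -/
theorem stmt11 (κ : Cardinal) (hκ : ℵ₀ ≤ κ) (hpow : 2 ^ κ = Order.succ κ)
    (S R : Type) (hR : #R ≤ Order.succ κ)
    (ι : Type) (hι : #ι = Order.succ (Order.succ κ))
    (f : ι → S → Option R) (hinj : Function.Injective f)
    (hdom : ∀ i : ι, #{x : S | f i x ≠ none} ≤ κ) :
    (∃ i j : ι, i ≠ j ∧
      ∀ x : S, f i x ≠ none → f j x ≠ none → f i x = f j x) ∧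
    (∀ A : Set (S → Option R),
      (∀ g ∈ A, #{x : S | g x ≠ none} ≤ κ) →
      (∀ g ∈ A, ∀ h ∈ A, g ≠ h → ∃ x : S, g x ≠ none ∧ h x ≠ none ∧ g x ≠ h x) →
      #A ≤ Order.succ κ) := by
  constructor
  · exact Stmt11Aux.key κ hκ hpow hR (by rw [hι]; exact Order.lt_succ _) f hdom
  · intro A hA hinc
    by_contra hle
    push_neg at hle
    obtain ⟨i, j, hij, hcomp⟩ := Stmt11Aux.key κ hκ hpow (ι := ↥A) hR hle
      (fun g => g.1) (fun g => hA g.1 g.2)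
    obtain ⟨x, hx1, hx2, hx3⟩ := hinc i.1 i.2 j.1 j.2 (fun e => hij (Subtype.ext e))
    exact hx3 (hcomp x hx1 hx2)
end

section
/- Let μ ≤ λ ≤ κ be infinite cardinals with μ < κ and suppose there exists a (μ, λ, κ)-Kurepa tree T. Then for every infinite cardinal ν ≤ κ there exists a tree T' of height at most μ, each of whose levels has fewer than λ elements, such that the cardinality of T' together with its set of cofinal branches is exactly ν (one may take a subtree of T together with a suitable subfamily of its cofinal branches). -/
open Cardinal Ordinal

/-- A `(μ, l, κ)`-Kurepa tree: a tree of height `μ`, all of whose levels have fewer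
than `l` elements, with exactly `κ` cofinal branches. -/
def IsGenKurepaTree (μ l κ : Cardinal) (α : Type) [PartialOrder α] : Prop :=
  IsTreeOrder α ∧ treeHeight α = μ.ord ∧ (∀ o : Ordinal, #(level α o) < l) ∧
    branchCard α = κ

section Aux
variable {α : Type} [PartialOrder α]

lemma elemHeight_eq (x : α) (h : IsWellOrder {y : α // y < x} (· < ·)) :
    elemHeight x = @Ordinal.type {y : α // y < x} (· < ·) h := by
  simp only [elemHeight, dif_pos h]

/-- iso between predecessors of `y` and the initial segment below `⟨y,hyx⟩` in preds of `x` -/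
def predIso {x y : α} (hyx : y < x) :
    ((· < ·) : {z : α // z < y} → {z : α // z < y} → Prop) ≃r
      Subrel ((· < ·) : {z : α // z < x} → {z : α // z < x} → Prop)
        {b : {z : α // z < x} | b < ⟨y, hyx⟩} where
  toFun z := ⟨⟨z.1, z.2.trans hyx⟩, z.2⟩
  invFun w := ⟨w.1.1, w.2⟩
  left_inv _ := rfl
  right_inv _ := rfl
  map_rel_iff' := Iff.rfl

lemma key1 {x y : α} (hx : IsWellOrder {z : α // z < x} (· < ·)) (hyx : y < x) :
    elemHeight y = @Ordinal.typein {z : α // z < x} (· < ·) hx ⟨y, hyx⟩ := by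
  haveI := hx
  have hy : IsWellOrder {z : α // z < y} (· < ·) :=
    @RelEmbedding.isWellOrder _ _ _ _ (predIso hyx).toRelEmbedding
      (inferInstanceAs (IsWellOrder _ (Subrel ((· < ·) : {z : α // z < x} → {z : α // z < x} → Prop)
        (fun b => b < ⟨y, hyx⟩))))
  rw [elemHeight_eq y hy, ← Ordinal.type_subrel]
  exact Ordinal.type_eq.2 ⟨predIso hyx⟩

lemma key2 {x y : α} (hx : IsWellOrder {z : α // z < x} (· < ·)) (hyx : y < x) :
    elemHeight y < elemHeight x := by
  rw [key1 hx hyx, elemHeight_eq x hx]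
  exact Ordinal.typein_lt_type _ _

lemma key3 {x : α} (hx : IsWellOrder {z : α // z < x} (· < ·)) {o : Ordinal}
    (ho : o < elemHeight x) : ∃ y : α, y < x ∧ elemHeight y = o := by
  haveI := hx
  rw [elemHeight_eq x hx] at ho
  obtain ⟨a, ha⟩ := Ordinal.typein_surj _ ho
  exact ⟨a.1, a.2, (key1 hx a.2).trans (by rw [← ha])⟩

lemma key4 (hT : IsTreeOrder α) {o : Ordinal} (h : level α o = ∅) (x : α) :
    elemHeight x < o := by
  by_contra hc
  rcases (not_lt.1 hc).eq_or_lt with he | hlt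
  · have hx : x ∈ level α o := he.symm
    rw [h] at hx; exact hx
  · obtain ⟨y, _, hy⟩ := key3 (hT x) hlt
    have hx : y ∈ level α o := hy
    rw [h] at hx; exact hx

lemma elemHeight_lt_bound (x : α) : elemHeight x < (Order.succ #α).ord := by
  rw [Cardinal.lt_ord]
  by_cases h : IsWellOrder {y : α // y < x} (· < ·)
  · rw [elemHeight_eq x h, Ordinal.card_type]
    exact (Cardinal.mk_subtype_le _).trans_lt (Order.lt_succ _)
  · simp only [elemHeight, dif_neg h, Ordinal.card_zero]
    exact lt_of_le_of_lt (zero_le : (0 : Cardinal) ≤ #α) (Order.lt_succ _)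

lemma key5 {c : Cardinal} (hc : ℵ₀ ≤ c) (h : treeHeight α = c.ord) :
    level α c.ord = ∅ := by
  have hne : {o : Ordinal | level α o = ∅}.Nonempty := by
    refine ⟨(Order.succ #α).ord, ?_⟩
    ext x
    simp only [level, Set.mem_setOf_eq, Set.mem_empty_iff_false, iff_false]
    exact (elemHeight_lt_bound x).ne
  have := csInf_mem hne
  rwa [← treeHeight, h] at this

lemma pred_comparable (hT : IsTreeOrder α) {x y z : α} (hyx : y < x) (hzx : z < x) :
    y < z ∨ y = z ∨ z < y := by
  haveI := hT x
  rcases @trichotomous _ ((· < ·) : {w : α // w < x} → {w : α // w < x} → Prop) _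
      ⟨y, hyx⟩ ⟨z, hzx⟩ with h | h | h
  · exact Or.inl h
  · exact Or.inr (Or.inl (congrArg Subtype.val h))
  · exact Or.inr (Or.inr h)

lemma branch_mem_of_lt (hT : IsTreeOrder α) {B : Set α} (hB : IsCofinalBranch α B)
    {x y : α} (hx : x ∈ B) (hyx : y < x) : y ∈ B := by
  by_cases hyB : y ∈ B
  · exact hyB
  have hchain : IsChain (· < ·) (insert y B) := by
    intro a ha b hb hab
    rcases Set.mem_insert_iff.1 ha with rfl | haB
    · rcases Set.mem_insert_iff.1 hb with rfl | hbB
      · exact absurd rfl hab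
      · -- a = y, b ∈ B
        rcases eq_or_ne b x with rfl | hbx
        · exact Or.inl hyx
        · rcases hB.1.1 hbB hx hbx with hlt | hlt
          · rcases pred_comparable hT hyx hlt with h | h | h
            · exact Or.inl h
            · exact absurd h.symm (by rintro rfl; exact hyB hbB)
            · exact Or.inr h
          · exact Or.inl (hyx.trans hlt)
    · rcases Set.mem_insert_iff.1 hb with rfl | hbB
      · rcases eq_or_ne a x with rfl | hax
        · exact Or.inr hyx
        · rcases hB.1.1 haB hx hax with hlt | hlt
          · rcases pred_comparable hT hlt hyx with h | h | h
            · exact Or.inl h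
            · exact absurd h (by rintro rfl; exact hyB haB)
            · exact Or.inr h
          · exact Or.inr (hyx.trans hlt)
      · exact hB.1.1 haB hbB hab
  have heq := hB.1.2 hchain (Set.subset_insert y B)
  rw [heq]; exact Set.mem_insert y B
end Aux

section WO
variable {β : Type} [LinearOrder β] [WellFoundedLT β]

lemma wo_treeOrder : IsTreeOrder β := fun x =>
  (Subrel.relEmbedding ((· < ·) : β → β → Prop) {y | y < x}).isWellOrder

lemma wo_elemHeight (x : β) : elemHeight x = Ordinal.typein (α := β) (· < ·) x := by
  rw [elemHeight_eq x (wo_treeOrder x), ← Ordinal.type_subrel]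
  exact Ordinal.type_eq.2 ⟨RelIso.refl _⟩
end WO

/-- The predecessors of `x` inside a downward-closed subset are order-isomorphic to its
predecessors in the ambient order. -/
def predIso2 {α : Type} [PartialOrder α] (T' : Set α)
    (hcl : ∀ x ∈ T', ∀ y : α, y < x → y ∈ T') (x : T') :
    ((· < ·) : {y : T' // y < x} → {y : T' // y < x} → Prop) ≃r
      ((· < ·) : {y : α // y < x.1} → {y : α // y < x.1} → Prop) where
  toFun w := ⟨w.1.1, w.2⟩
  invFun z := ⟨⟨z.1, hcl x.1 x.2 z.1 z.2⟩, z.2⟩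
  left_inv _ := rfl
  right_inv _ := rfl
  map_rel_iff' := Iff.rfl

/-- Downward transfer: if there is a `(μ, λ, κ)`-Kurepa tree, then for every infinite
`ν ≤ κ` there is a tree of height at most `μ` with levels of fewer than `λ` elements,
together with a family of its cofinal branches, whose total cardinality is exactly `ν`. -/
theorem stmt12 (μ lam κ : Cardinal) (hμ : ℵ₀ ≤ μ) (hμlam : μ ≤ lam) (hlamκ : lam ≤ κ)
    (hμκ : μ < κ)
    (hex : ∃ (α : Type) (inst : PartialOrder α), @IsGenKurepaTree μ lam κ α inst) :
    ∀ ν : Cardinal, ℵ₀ ≤ ν → ν ≤ κ →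
      ∃ (α' : Type) (inst : PartialOrder α'),
        @IsTreeOrder α' inst ∧
        @treeHeight α' inst ≤ μ.ord ∧
        (∀ o : Ordinal, #(@level α' inst o) < lam) ∧
        ∃ X : Set (Set α'), (∀ B ∈ X, @IsCofinalBranch α' inst B) ∧ #α' + #X = ν := by
  intro ν hν hνκ
  rcases le_or_gt ν μ with hνμ | hμν
  · -- small case: a linear tree of order type `ν.ord`
    refine ⟨ν.ord.ToType, inferInstance, wo_treeOrder, ?_, ?_, ∅, fun B hB => absurd hB (Set.notMem_empty B), ?_⟩
    · have hemp : level ν.ord.ToType ν.ord = ∅ := by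
        ext x
        simp only [level, Set.mem_setOf_eq, Set.mem_empty_iff_false, iff_false]
        rw [wo_elemHeight]
        exact (Ordinal.typein_lt_self x).ne
      rw [treeHeight]
      exact (csInf_le' (show ν.ord ∈ {o : Ordinal | level ν.ord.ToType o = ∅} from
        hemp)).trans (Cardinal.ord_le_ord.2 hνμ)
    · intro o
      have h1 : #(level ν.ord.ToType o) ≤ 1 := by
        rw [Cardinal.mk_le_one_iff_set_subsingleton]
        intro a ha b hb
        have hab : elemHeight a = elemHeight b :=
          (show elemHeight a = o from ha).trans (show elemHeight b = o from hb).symm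
        rw [wo_elemHeight, wo_elemHeight] at hab
        haveI : IsWellOrder ν.ord.ToType (· < ·) := isWellOrder_lt
        exact Ordinal.typein_injective _ hab
      exact h1.trans_lt (lt_of_lt_of_le Cardinal.one_lt_aleph0 (hμ.trans hμlam))
    · rw [Cardinal.mk_emptyCollection, add_zero, Cardinal.mk_ord_toType]
  · -- large case: a subtree of the Kurepa tree spanned by `ν` branches
    obtain ⟨α, inst, hT, hH, hlev, hbr⟩ := hex
    have hlevμ : level α μ.ord = ∅ := key5 hμ hH
    have hbound : ∀ x : α, elemHeight x < μ.ord := key4 hT hlevμ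
    have hνbr : ν ≤ #{B : Set α // IsCofinalBranch α B} := by
      rw [show #{B : Set α // IsCofinalBranch α B} = κ from hbr]; exact hνκ
    obtain ⟨P, hP⟩ := Cardinal.le_mk_iff_exists_set.1 hνbr
    set S : Set (Set α) := Subtype.val '' P with hSdef
    have hS : ∀ B ∈ S, IsCofinalBranch α B := by rintro B ⟨b, _, rfl⟩; exact b.2
    have hScard : #S = ν := by rw [hSdef, Cardinal.mk_image_eq Subtype.val_injective, hP]
    set T' : Set α := ⋃₀ S with hT'def
    have hsub : ∀ B ∈ S, B ⊆ T' := fun B hB => Set.subset_sUnion_of_mem hB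
    have hcl : ∀ x ∈ T', ∀ y : α, y < x → y ∈ T' := by
      rintro x ⟨B, hBS, hxB⟩ y hyx
      exact hsub B hBS (branch_mem_of_lt hT (hS B hBS) hxB hyx)
    have htree' : IsTreeOrder T' := fun x => by
      haveI := hT x.1
      exact (predIso2 T' hcl x).toRelEmbedding.isWellOrder
    have hheight : ∀ x : T', elemHeight x = elemHeight x.1 := fun x => by
      haveI := htree' x
      haveI := hT x.1
      rw [elemHeight_eq x (htree' x), elemHeight_eq x.1 (hT x.1)]
      exact Ordinal.type_eq.2 ⟨predIso2 T' hcl x⟩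
    have hlevel' : ∀ o : Ordinal, level T' o = Subtype.val ⁻¹' level α o := by
      intro o; ext x
      simp only [level, Set.mem_setOf_eq, Set.mem_preimage, hheight x]
    have hμ0 : (μ : Cardinal) ≠ 0 := (Cardinal.aleph0_pos.trans_le hμ).ne'
    refine ⟨T', inferInstance, htree', ?_, ?_,
      (fun B => (Subtype.val : T' → α) ⁻¹' B) '' S, ?_, ?_⟩
    · -- height
      have hemp : level T' μ.ord = ∅ := by rw [hlevel', hlevμ, Set.preimage_empty]
      rw [treeHeight]
      exact csInf_le' (show μ.ord ∈ {o : Ordinal | level (↥T') o = ∅} from hemp)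
    · -- levels
      intro o
      rw [hlevel' o]
      exact (Cardinal.mk_preimage_of_injective _ _ Subtype.val_injective).trans_lt (hlev o)
    · -- branches
      rintro B' ⟨B, hBS, rfl⟩
      have hBbr := hS B hBS
      refine ⟨⟨?_, ?_⟩, ?_⟩
      · intro a ha b hb hab
        exact hBbr.1.1 ha hb (fun h => hab (Subtype.ext h))
      · intro C hC hBC
        have himg : IsChain (· < ·) (Subtype.val '' C) :=
          hC.image_of_map_rel ((· < ·) : T' → T' → Prop) ((· < ·) : α → α → Prop) Subtype.val
            (fun _ _ h => h)
        have hBimg : B ⊆ Subtype.val '' C := fun y hy =>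
          ⟨⟨y, hsub B hBS hy⟩, hBC hy, rfl⟩
        have hBeq := hBbr.1.2 himg hBimg
        refine Set.Subset.antisymm hBC (fun c hc => ?_)
        show c.1 ∈ B
        rw [hBeq]; exact ⟨c, hc, rfl⟩
      · rintro o ⟨x, hx⟩
        have hx1 : elemHeight x.1 = o := by rw [← hheight x]; exact hx
        obtain ⟨y, hyB, hy⟩ := hBbr.2 o ⟨x.1, hx1⟩
        refine ⟨⟨y, hsub B hBS hyB⟩, hyB, ?_⟩
        rw [hheight]; exact hy
    · -- cardinality
      have hBcard : ∀ B ∈ S, #B ≤ μ := by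
        intro B hBS
        haveI : IsWellOrder μ.ord.ToType (· < ·) := isWellOrder_lt
        have hinj : Function.Injective (fun b : B =>
            (Ordinal.enum ((· < ·) : μ.ord.ToType → μ.ord.ToType → Prop)
              ⟨elemHeight b.1, by rw [Ordinal.type_toType]; exact hbound b.1⟩)) := by
          intro b1 b2 h
          rw [Ordinal.enum_inj] at h
          have hh : elemHeight b1.1 = elemHeight b2.1 := congrArg Subtype.val h
          by_contra hne
          have hne1 : b1.1 ≠ b2.1 := fun hv => hne (Subtype.ext hv)
          rcases hBbr_aux : (hS B hBS).1.1 b1.2 b2.2 hne1 with hlt | hlt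
          · exact (key2 (hT b2.1) hlt).ne hh
          · exact (key2 (hT b1.1) hlt).ne hh.symm
        calc #B ≤ #μ.ord.ToType := Cardinal.mk_le_of_injective hinj
          _ = μ := Cardinal.mk_ord_toType μ
      have hSne : Nonempty S := by
        rw [← Cardinal.mk_ne_zero_iff, hScard]
        exact (Cardinal.aleph0_pos.trans_le hν).ne'
      have hT'card : #T' ≤ ν := by
        calc #T' ≤ #S * ⨆ s : S, #s.1 := Cardinal.mk_sUnion_le S
          _ ≤ ν * μ := mul_le_mul' (le_of_eq hScard) (ciSup_le' (fun s => hBcard s.1 s.2))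
          _ = ν := Cardinal.mul_eq_left hν hμν.le hμ0
      have hXcard : #((fun B => (Subtype.val : T' → α) ⁻¹' B) '' S) = ν := by
        rw [Cardinal.mk_image_eq_of_injOn _ _ ?_, hScard]
        have hre : ∀ B ∈ S, Subtype.val '' ((Subtype.val : T' → α) ⁻¹' B) = B := by
          intro B hB
          rw [Subtype.image_preimage_coe]
          exact Set.inter_eq_right.2 (hsub B hB)
        intro B1 h1 B2 h2 he
        have he' : (Subtype.val ⁻¹' B1 : Set T') = Subtype.val ⁻¹' B2 := he
        rw [← hre B1 h1, ← hre B2 h2, he']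
      rw [hXcard, Cardinal.add_eq_right hν hT'card]
end
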